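/- For every fuzzy cover q ∈ Δ_N there exist fuzzy covers q̲ and q̄ in Δ_N such that (i) W(q̲) ≤ W(q) ≤ W(q̄), and (ii) every coordinate q̲_i and q̄_i is an extreme point of the simplex Δ_i (i.e., each element concentrates its whole membership on a single subset containing it). -/

import Mathlib

open Finset

/-- Möbius inversion of a set function `w : 2^N → ℝ`:
`μ^w(A) = ∑_{B ⊆ A} (−1)^{|A∖B|} w(B)`. -/
def mobius {n : ℕ} (w : Finset (Fin n) → ℝ) (A : Finset (Fin n)) : ℝ :=
  ∑ B ∈ A.powerset, (-1 : ℝ) ^ (A.card - B.card) * w B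

/-- `qi` is a membership distribution for element `i`: nonnegative, supported on
the subsets containing `i`, and summing to `1` over them. -/
def coordDist {n : ℕ} (i : Fin n) (qi : Finset (Fin n) → ℝ) : Prop :=
  (∀ A, 0 ≤ qi A) ∧ (∀ A, i ∉ A → qi A = 0) ∧
    ∑ A ∈ Finset.univ.filter (fun A => i ∈ A), qi A = 1

/-- A fuzzy cover `q ∈ Δ_N`. -/
def fuzzyCover {n : ℕ} (q : Fin n → Finset (Fin n) → ℝ) : Prop :=
  ∀ i, coordDist i (q i)

/-- Global worth `W(q) = ∑_{A⊆N} ∑_{B⊆A} (∏_{i∈B} q_i^A) μ^w(B)`. -/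
def W {n : ℕ} (w : Finset (Fin n) → ℝ) (q : Fin n → Finset (Fin n) → ℝ) : ℝ :=
  ∑ A : Finset (Fin n), ∑ B ∈ A.powerset, (∏ i ∈ B, q i A) * mobius w B


/-- The extreme point of `Δ_i` concentrating the whole membership mass on `A`. -/
def dirac {n : ℕ} (A : Finset (Fin n)) : Finset (Fin n) → ℝ :=
  fun B => if B = A then 1 else 0

noncomputable def coeff {n : ℕ} (w : Finset (Fin n) → ℝ)
    (q : Fin n → Finset (Fin n) → ℝ) (i : Fin n) (A : Finset (Fin n)) : ℝ :=
  ∑ B ∈ A.powerset.filter (fun B => i ∈ B), (∏ j ∈ B.erase i, q j A) * mobius w B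

noncomputable def cst {n : ℕ} (w : Finset (Fin n) → ℝ)
    (q : Fin n → Finset (Fin n) → ℝ) (i : Fin n) : ℝ :=
  ∑ A : Finset (Fin n), ∑ B ∈ A.powerset.filter (fun B => i ∉ B),
    (∏ j ∈ B, q j A) * mobius w B

lemma W_update_linear {n : ℕ} (w : Finset (Fin n) → ℝ)
    (q : Fin n → Finset (Fin n) → ℝ) (i : Fin n) (r : Finset (Fin n) → ℝ) :
    W w (Function.update q i r) =
      (∑ A : Finset (Fin n), r A * coeff w q i A) + cst w q i := by
  unfold W coeff cst
  rw [← Finset.sum_add_distrib]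
  refine Finset.sum_congr rfl fun A _ => ?_
  rw [← Finset.sum_filter_add_sum_filter_not A.powerset (fun B => i ∈ B)]
  congr 1
  · rw [Finset.mul_sum]
    refine Finset.sum_congr rfl fun B hB => ?_
    simp only [mem_filter] at hB
    have h1 : ∏ j ∈ B, Function.update q i r j A = r A * ∏ j ∈ B.erase i, q j A := by
      rw [← Finset.mul_prod_erase B _ hB.2, Function.update_self]
      congr 1
      exact Finset.prod_congr rfl fun j hj =>
        congrFun (Function.update_of_ne (Finset.ne_of_mem_erase hj) _ _) A
    rw [h1]; ring
  · refine Finset.sum_congr rfl fun B hB => ?_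
    simp only [mem_filter] at hB
    congr 1
    exact Finset.prod_congr rfl fun j hj =>
      congrFun (Function.update_of_ne (by rintro rfl; exact hB.2 hj) _ _) A

lemma coordDist_dirac {n : ℕ} {i : Fin n} {A : Finset (Fin n)} (hA : i ∈ A) :
    coordDist i (dirac A) := by
  refine ⟨fun B => by unfold dirac; positivity, fun B hB => ?_, ?_⟩
  · unfold dirac
    rw [if_neg]; rintro rfl; exact hB hA
  · unfold dirac
    rw [Finset.sum_ite_eq' _ A (fun _ => (1:ℝ))]
    simp [hA]

lemma fuzzyCover_update {n : ℕ} {q : Fin n → Finset (Fin n) → ℝ} (hq : fuzzyCover q)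
    {i : Fin n} {A : Finset (Fin n)} (hA : i ∈ A) :
    fuzzyCover (Function.update q i (dirac A)) := by
  intro j
  rcases eq_or_ne j i with rfl | hne
  · rw [Function.update_self]; exact coordDist_dirac hA
  · rw [Function.update_of_ne hne]; exact hq j

lemma W_dirac_update {n : ℕ} (w : Finset (Fin n) → ℝ)
    (q : Fin n → Finset (Fin n) → ℝ) (i : Fin n) (A : Finset (Fin n)) :
    W w (Function.update q i (dirac A)) = coeff w q i A + cst w q i := by
  rw [W_update_linear]
  congr 1
  have : ∀ B : Finset (Fin n), dirac A B * coeff w q i B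
      = if B = A then coeff w q i B else 0 := by
    intro B; unfold dirac; split <;> simp
  rw [Finset.sum_congr rfl fun B _ => this B, Finset.sum_ite_eq' _ A]
  simp

lemma W_as_sum {n : ℕ} (w : Finset (Fin n) → ℝ)
    {q : Fin n → Finset (Fin n) → ℝ} (hq : fuzzyCover q) (i : Fin n) :
    W w q = (∑ A ∈ Finset.univ.filter (fun A => i ∈ A), q i A * coeff w q i A)
      + cst w q i := by
  conv_lhs => rw [← Function.update_eq_self i q]
  rw [W_update_linear]
  congr 1
  rw [Finset.sum_filter]
  refine Finset.sum_congr rfl fun A _ => ?_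
  split
  · rfl
  · rw [(hq i).2.1 A (by assumption), zero_mul]

lemma exists_update_le {n : ℕ} (w : Finset (Fin n) → ℝ)
    {q : Fin n → Finset (Fin n) → ℝ} (hq : fuzzyCover q) (i : Fin n) :
    ∃ A, i ∈ A ∧ W w (Function.update q i (dirac A)) ≤ W w q := by
  set s := Finset.univ.filter (fun A : Finset (Fin n) => i ∈ A) with hs
  have hsne : s.Nonempty := ⟨Finset.univ, by simp [hs]⟩
  obtain ⟨A0, hA0, hmin⟩ := Finset.exists_min_image s (coeff w q i) hsne
  refine ⟨A0, by simpa [hs] using hA0, ?_⟩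
  rw [W_dirac_update, W_as_sum w hq i]
  have h1 : coeff w q i A0 = ∑ A ∈ s, q i A * coeff w q i A0 := by
    rw [← Finset.sum_mul, (hq i).2.2, one_mul]
  have h2 : ∑ A ∈ s, q i A * coeff w q i A0 ≤ ∑ A ∈ s, q i A * coeff w q i A :=
    Finset.sum_le_sum fun A hA =>
      mul_le_mul_of_nonneg_left (hmin A hA) ((hq i).1 A)
  linarith [h1 ▸ h2]

lemma exists_update_ge {n : ℕ} (w : Finset (Fin n) → ℝ)
    {q : Fin n → Finset (Fin n) → ℝ} (hq : fuzzyCover q) (i : Fin n) :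
    ∃ A, i ∈ A ∧ W w q ≤ W w (Function.update q i (dirac A)) := by
  set s := Finset.univ.filter (fun A : Finset (Fin n) => i ∈ A) with hs
  have hsne : s.Nonempty := ⟨Finset.univ, by simp [hs]⟩
  obtain ⟨A0, hA0, hmax⟩ := Finset.exists_max_image s (coeff w q i) hsne
  refine ⟨A0, by simpa [hs] using hA0, ?_⟩
  rw [W_dirac_update, W_as_sum w hq i]
  have h1 : coeff w q i A0 = ∑ A ∈ s, q i A * coeff w q i A0 := by
    rw [← Finset.sum_mul, (hq i).2.2, one_mul]
  have h2 : ∑ A ∈ s, q i A * coeff w q i A ≤ ∑ A ∈ s, q i A * coeff w q i A0 :=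
    Finset.sum_le_sum fun A hA =>
      mul_le_mul_of_nonneg_left (hmax A hA) ((hq i).1 A)
  linarith [h1 ▸ h2]

lemma brk_le {n : ℕ} (w : Finset (Fin n) → ℝ)
    {q : Fin n → Finset (Fin n) → ℝ} (hq : fuzzyCover q) (s : Finset (Fin n)) :
    ∃ q' : Fin n → Finset (Fin n) → ℝ, fuzzyCover q' ∧
      (∀ i ∈ s, ∃ A, i ∈ A ∧ q' i = dirac A) ∧ W w q' ≤ W w q := by
  induction s using Finset.induction_on with
  | empty => exact ⟨q, hq, by simp, le_refl _⟩
  | insert a t hnotmem =>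
    obtain ⟨q', hq', hext, hle⟩ := ‹_›
    obtain ⟨A, hA, hle2⟩ := exists_update_le w hq' a
    refine ⟨Function.update q' a (dirac A), fuzzyCover_update hq' hA, ?_, hle2.trans hle⟩
    intro i hi
    rcases Finset.mem_insert.mp hi with rfl | hit
    · exact ⟨A, hA, Function.update_self _ _ _⟩
    · obtain ⟨A', hA', hEq⟩ := hext i hit
      exact ⟨A', hA', by rw [Function.update_of_ne (by rintro rfl; exact hnotmem hit)]; exact hEq⟩

lemma brk_ge {n : ℕ} (w : Finset (Fin n) → ℝ)
    {q : Fin n → Finset (Fin n) → ℝ} (hq : fuzzyCover q) (s : Finset (Fin n)) :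
    ∃ q' : Fin n → Finset (Fin n) → ℝ, fuzzyCover q' ∧
      (∀ i ∈ s, ∃ A, i ∈ A ∧ q' i = dirac A) ∧ W w q ≤ W w q' := by
  induction s using Finset.induction_on with
  | empty => exact ⟨q, hq, by simp, le_refl _⟩
  | insert a t hnotmem =>
    obtain ⟨q', hq', hext, hle⟩ := ‹_›
    obtain ⟨A, hA, hle2⟩ := exists_update_ge w hq' a
    refine ⟨Function.update q' a (dirac A), fuzzyCover_update hq' hA, ?_, hle.trans hle2⟩
    intro i hi
    rcases Finset.mem_insert.mp hi with rfl | hit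
    · exact ⟨A, hA, Function.update_self _ _ _⟩
    · obtain ⟨A', hA', hEq⟩ := hext i hit
      exact ⟨A', hA', by rw [Function.update_of_ne (by rintro rfl; exact hnotmem hit)]; exact hEq⟩


/-- every fuzzy cover `q ∈ Δ_N` is bracketed by fuzzy covers all of
whose coordinates are extreme points of the simplices `Δ_i`. -/
theorem bracketing_by_extreme_covers {n : ℕ} (w : Finset (Fin n) → ℝ) (hw : w ∅ = 0)
    (q : Fin n → Finset (Fin n) → ℝ) (hq : fuzzyCover q) :
    ∃ qlo qhi : Fin n → Finset (Fin n) → ℝ,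
      fuzzyCover qlo ∧ fuzzyCover qhi ∧
      (∀ i : Fin n, ∃ A : Finset (Fin n), i ∈ A ∧ qlo i = dirac A) ∧
      (∀ i : Fin n, ∃ A : Finset (Fin n), i ∈ A ∧ qhi i = dirac A) ∧
      W w qlo ≤ W w q ∧ W w q ≤ W w qhi := by
  obtain ⟨qlo, h1, h2, h3⟩ := brk_le w hq Finset.univ
  obtain ⟨qhi, h4, h5, h6⟩ := brk_ge w hq Finset.univ
  exact ⟨qlo, qhi, h1, h4, fun i => h2 i (Finset.mem_univ i),
    fun i => h5 i (Finset.mem_univ i), h3, h6⟩
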